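/- Let n ≥ 2, let a₀ be an (n−1)×(n−1) complex matrix, α a complex number, u a complex column vector of length n−1, and set a₁ = a₀ − α·I. Then the matrix exponential of the n×n block matrix a = [[a₀, u],[0, α]] equals e^α · [[exp(a₁), φ(a₁)·u],[0, 1]], where φ(a₁) = Σ_{k≥0} a₁^k/(k+1)! is the matrix obtained by applying the power series of φ(z) = (e^z − 1)/z (with φ(0) = 1) to a₁. -/

import Mathlib

open Matrix

/-- `φ` applied to a square complex matrix: `φ(m) = Σ_{k≥0} m^k / (k+1)!`,
the power series of `φ(z) = (e^z - 1)/z` (with `φ(0) = 1`). -/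
noncomputable def matPhi {m : Type*} [Fintype m] [DecidableEq m]
    (A : Matrix m m ℂ) : Matrix m m ℂ :=
  ∑' k : ℕ, (((k + 1).factorial : ℂ))⁻¹ • A ^ k

section Aux

variable {m : Type*} [Fintype m] [DecidableEq m]

attribute [local instance] Matrix.linftyOpNormedRing Matrix.linftyOpNormedAlgebra

lemma hasSum_expSeries (A : Matrix m m ℂ) :
    HasSum (fun k : ℕ => ((k.factorial : ℂ))⁻¹ • A ^ k) (NormedSpace.exp A) := by
  have := NormedSpace.expSeries_hasSum_exp (𝕂 := ℂ) A
  simp only [NormedSpace.expSeries_apply_eq] at this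
  exact this

lemma hasSum_matPhi (A : Matrix m m ℂ) :
    HasSum (fun k : ℕ => (((k + 1).factorial : ℂ))⁻¹ • A ^ k) (matPhi A) := by
  have hs : Summable (fun k : ℕ => (((k + 1).factorial : ℂ))⁻¹ • A ^ k) := by
    refine Summable.of_norm_bounded (NormedSpace.norm_expSeries_summable' (𝕂 := ℂ) A) ?_
    intro k
    rw [norm_smul, norm_smul]
    apply mul_le_mul_of_nonneg_right _ (norm_nonneg _)
    simp only [norm_inv, Complex.norm_natCast]
    apply inv_anti₀
    · exact_mod_cast Nat.cast_pos.mpr k.factorial_pos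
    · exact_mod_cast Nat.factorial_le (Nat.le_succ k)
  simpa [matPhi] using hs.hasSum

end Aux

/-- The exponential of the block matrix `a = [[a₀, u], [0, α]]` is
`e^α • [[exp a₁, φ(a₁) * u], [0, 1]]`, where `a₁ = a₀ - α • I`. -/
theorem exp_fromBlocks (n : ℕ) (hn : 2 ≤ n)
    (a₀ : Matrix (Fin (n - 1)) (Fin (n - 1)) ℂ) (α : ℂ)
    (u : Matrix (Fin (n - 1)) Unit ℂ)
    (a₁ : Matrix (Fin (n - 1)) (Fin (n - 1)) ℂ) (ha₁ : a₁ = a₀ - α • 1) :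
    NormedSpace.exp (Matrix.fromBlocks a₀ u 0 (Matrix.of fun _ _ => α)) =
      Complex.exp α •
        Matrix.fromBlocks (NormedSpace.exp a₁) (matPhi a₁ * u) 0 (1 : Matrix Unit Unit ℂ) := by
  letI : SeminormedRing (Matrix (Fin (n-1) ⊕ Unit) (Fin (n-1) ⊕ Unit) ℂ) :=
    Matrix.linftyOpSemiNormedRing
  letI : NormedRing (Matrix (Fin (n-1) ⊕ Unit) (Fin (n-1) ⊕ Unit) ℂ) :=
    Matrix.linftyOpNormedRing
  letI : NormedAlgebra ℂ (Matrix (Fin (n-1) ⊕ Unit) (Fin (n-1) ⊕ Unit) ℂ) :=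
    Matrix.linftyOpNormedAlgebra
  set N : Matrix (Fin (n-1) ⊕ Unit) (Fin (n-1) ⊕ Unit) ℂ := Matrix.fromBlocks a₁ u 0 0 with hN
  -- split the matrix
  have hsplit : (Matrix.fromBlocks a₀ u 0 (Matrix.of fun _ _ => α) :
      Matrix (Fin (n-1) ⊕ Unit) (Fin (n-1) ⊕ Unit) ℂ) = algebraMap ℂ _ α + N := by
    rw [Algebra.algebraMap_eq_smul_one, ← Matrix.fromBlocks_one, Matrix.fromBlocks_smul,
      hN, Matrix.fromBlocks_add, ha₁]
    ext i j
    rcases i with i | i <;> rcases j with j | j <;>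
      simp [Matrix.one_apply] <;> split_ifs <;> ring
  -- powers of N
  set B : ℕ → Matrix (Fin (n-1)) Unit ℂ := fun k => Nat.rec 0 (fun j _ => a₁ ^ j * u) k with hB
  set D : ℕ → Matrix Unit Unit ℂ := fun k => Nat.rec 1 (fun _ _ => 0) k with hD
  have hNpow : ∀ k, N ^ k = Matrix.fromBlocks (a₁ ^ k) (B k) 0 (D k) := by
    intro k
    induction k with
    | zero => simp [hB, hD, Matrix.fromBlocks_one]
    | succ j ih =>
      rw [pow_succ, ih, hN, Matrix.fromBlocks_multiply]
      simp [hB, hD, pow_succ]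
  -- block HasSums
  have hTL := hasSum_expSeries a₁
  have hTR0 : HasSum (fun k : ℕ => (((k + 1).factorial : ℂ))⁻¹ • a₁ ^ k * u)
      (matPhi a₁ * u) := by
    have : Continuous (fun A : Matrix (Fin (n-1)) (Fin (n-1)) ℂ => A * u) :=
      Continuous.matrix_mul continuous_id continuous_const
    exact (hasSum_matPhi a₁).map
      (AddMonoidHom.mk' (fun A : Matrix (Fin (n-1)) (Fin (n-1)) ℂ => A * u)
        (fun A B' => Matrix.add_mul A B' u)) this
  have hTR : HasSum (fun k : ℕ => ((k.factorial : ℂ))⁻¹ • B k) (matPhi a₁ * u) := by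
    rw [← hasSum_nat_add_iff' 1]
    simp only [Finset.range_one, Finset.sum_singleton]
    have h0 : ((Nat.factorial 0 : ℂ))⁻¹ • B 0 = 0 := by simp [hB]
    rw [h0, sub_zero]
    convert hTR0 using 2 with k
    rfl
    simp [hB, smul_mul_assoc]
  have hBR : HasSum (fun k : ℕ => ((k.factorial : ℂ))⁻¹ • D k) 1 := by
    have := hasSum_single (f := fun k : ℕ => ((k.factorial : ℂ))⁻¹ • D k) 0 (by
      intro b hb
      cases b with
      | zero => exact absurd rfl hb
      | succ j => simp [hD])
    simpa [hD] using this
  -- combine into the big HasSum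
  have hbig : HasSum (fun k : ℕ => ((k.factorial : ℂ))⁻¹ • N ^ k)
      (Matrix.fromBlocks (NormedSpace.exp a₁) (matPhi a₁ * u) 0
        (1 : Matrix Unit Unit ℂ)) := by
    have hmapTL := hTL.map
      (AddMonoidHom.mk' (fun A : Matrix (Fin (n-1)) (Fin (n-1)) ℂ =>
        (Matrix.fromBlocks A 0 0 0 : Matrix (Fin (n-1) ⊕ Unit) (Fin (n-1) ⊕ Unit) ℂ))
        (fun A A' => by simp [Matrix.fromBlocks_add]))
      (Continuous.matrix_fromBlocks continuous_id continuous_const continuous_const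
        continuous_const)
    have hmapTR := hTR.map
      (AddMonoidHom.mk' (fun A : Matrix (Fin (n-1)) Unit ℂ =>
        (Matrix.fromBlocks 0 A 0 0 : Matrix (Fin (n-1) ⊕ Unit) (Fin (n-1) ⊕ Unit) ℂ))
        (fun A A' => by simp [Matrix.fromBlocks_add]))
      (Continuous.matrix_fromBlocks continuous_const continuous_id continuous_const
        continuous_const)
    have hmapBR := hBR.map
      (AddMonoidHom.mk' (fun A : Matrix Unit Unit ℂ =>
        (Matrix.fromBlocks 0 0 0 A : Matrix (Fin (n-1) ⊕ Unit) (Fin (n-1) ⊕ Unit) ℂ))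
        (fun A A' => by simp [Matrix.fromBlocks_add]))
      (Continuous.matrix_fromBlocks continuous_const continuous_const continuous_const
        continuous_id)
    have hsum := (hmapTL.add hmapTR).add hmapBR
    simp only [AddMonoidHom.mk'_apply, Function.comp_def] at hsum
    convert hsum using 1
    · funext k
      rw [hNpow k, Matrix.fromBlocks_smul, Matrix.fromBlocks_add, Matrix.fromBlocks_add]
      simp
    · rw [Matrix.fromBlocks_add, Matrix.fromBlocks_add]
      simp
  have hexpN : NormedSpace.exp N =
      Matrix.fromBlocks (NormedSpace.exp a₁) (matPhi a₁ * u) 0 (1 : Matrix Unit Unit ℂ) := by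
    rw [NormedSpace.exp_eq_tsum (𝕂 := ℂ)]
    exact hbig.tsum_eq
  rw [hsplit, Matrix.exp_add_of_commute _ _ (Algebra.commutes α N)]
  erw [← NormedSpace.algebraMap_exp_comm]
  rw [ hexpN, ← Complex.exp_eq_exp_ℂ,
    Algebra.algebraMap_eq_smul_one, smul_mul_assoc, one_mul]
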